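/- arXiv:1112.3001 — 2 statements merged into one kernel-verified Lean document; each statement's English description precedes it below -/
import Mathlib

section
/- Let H be a complex separable Hilbert space, A a bounded self-adjoint operator on H, and λ0 ∈ ℝ. Let γ be a bounded analytic function on the upper half-plane ℂ₊, not identically zero, whose a.e. vertical boundary values γ₀(t) = lim_{ε↓0} γ(t+iε) are non-real for Lebesgue-a.e. t ∈ (−∞, λ0). Suppose γ weakly annihilates A in the sense that for all u, v ∈ H, ⟨g_ε(A)u, v⟩ → 0 as ε ↓ 0, where g_ε(t) = γ(t+iε) − conj(γ(t+iε)) and g_ε(A) is given by the continuous functional calculus. Then the spectrum of A to the left of λ0 is purely singular, i.e. for every u ∈ H the restriction of the scalar spectral measure μ_u to (−∞, λ0) is mutually singular with Lebesgue measure. -/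
open MeasureTheory Complex Filter Topology Set ComplexConjugate
open scoped ENNReal

set_option maxHeartbeats 2000000

noncomputable section

variable {H : Type*} [NormedAddCommGroup H] [InnerProductSpace ℂ H] [CompleteSpace H]

/-- `μ` is the scalar spectral measure of the bounden self-adjoint operator `A` at the
vector `u`: it is finite and `⟨f(A)u, u⟩ = ∫ f dμ` for every continuous `f : ℝ → ℝ`,
`f(A)` being given by the continuous functional calculus. -/
def IsSpectralMeasureAt (A : H →L[ℂ] H) (u : H) (μ : Measure ℝ) : Prop :=
  IsFiniteMeasure μ ∧
    ∀ f : ℝ → ℝ, Continuous f → (inner ℂ (cfc f A u) u : ℂ) = ((∫ t, f t ∂μ : ℝ) : ℂ)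

/-- A function is bounded and analytic on the open upper half-plane. -/
def BddAnalyticUpper {E : Type*} [NormedAddCommGroup E] [NormedSpace ℂ E] (γ : ℂ → E) : Prop :=
  DifferentiableOn ℂ γ {z : ℂ | 0 < z.im} ∧ ∃ C : ℝ, ∀ z : ℂ, 0 < z.im → ‖γ z‖ ≤ C

/-- A function is bounded and analytic on the open lower half-plane. -/
def BddAnalyticLower {E : Type*} [NormedAddCommGroup E] [NormedSpace ℂ E] (γ : ℂ → E) : Prop :=
  DifferentiableOn ℂ γ {z : ℂ | z.im < 0} ∧ ∃ C : ℝ, ∀ z : ℂ, z.im < 0 → ‖γ z‖ ≤ C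

/-- `γ` is an outer function in the upper half-plane, with boundary values `γ₀`:
the vertical boundary values exist a.e. and equal `γ₀`, `log |γ₀(t)|/(1+t²)` is
Lebesgue integrable, and `log |γ|` is the Poisson integral of `log |γ₀|`. -/
def IsOuterUpper (γ : ℂ → ℂ) (γ₀ : ℝ → ℂ) : Prop :=
  (∀ᵐ t : ℝ, Tendsto (fun ε : ℝ => γ ((t : ℂ) + ε * I)) (𝓝[>] 0) (𝓝 (γ₀ t))) ∧
  Integrable (fun t : ℝ => Real.log (‖γ₀ t‖) / (1 + t ^ 2)) ∧
  ∀ x y : ℝ, 0 < y →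
    Real.log (‖γ ((x : ℂ) + y * I)‖) =
      (1 / Real.pi) * ∫ t : ℝ, (y / ((x - t) ^ 2 + y ^ 2)) * Real.log (‖γ₀ t‖)

/-- `δ` is an outer function in the lower half-plane, with boundary values `δ₀`. -/
def IsOuterLower (δ : ℂ → ℂ) (δ₀ : ℝ → ℂ) : Prop :=
  (∀ᵐ t : ℝ, Tendsto (fun ε : ℝ => δ ((t : ℂ) - ε * I)) (𝓝[>] 0) (𝓝 (δ₀ t))) ∧
  Integrable (fun t : ℝ => Real.log (‖δ₀ t‖) / (1 + t ^ 2)) ∧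
  ∀ x y : ℝ, y < 0 →
    Real.log (‖δ ((x : ℂ) + y * I)‖) =
      (1 / Real.pi) * ∫ t : ℝ, (|y| / ((x - t) ^ 2 + y ^ 2)) * Real.log (‖δ₀ t‖)

/-- If a bounded analytic function `γ` on `ℂ₊`, not identically zero,
has a.e. vertical boundary values that are non-real a.e. on `(−∞, lam0)`, and `γ` weakly
annihilates the bounded self-adjoint operator `A` (i.e. `⟨g_ε(A)u, v⟩ → 0` for all `u, v`,
with `g_ε(t) = γ(t+iε) − conj (γ(t+iε))`), then the spectrum of `A` to the left of `lam0`
is purely singular. -/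
theorem singular_left_of_weak_annihilator
    {H : Type*} [NormedAddCommGroup H] [InnerProductSpace ℂ H] [CompleteSpace H]
    [TopologicalSpace.SeparableSpace H]
    (A : H →L[ℂ] H) (hA : IsSelfAdjoint A)
    (μ : H → Measure ℝ) (hμ : ∀ u : H, IsSpectralMeasureAt A u (μ u))
    (lam0 : ℝ) (γ : ℂ → ℂ) (γ₀ : ℝ → ℂ)
    (hγ : BddAnalyticUpper γ)
    (hne : ∃ z : ℂ, 0 < z.im ∧ γ z ≠ 0)
    (hconv : ∀ᵐ t : ℝ, Tendsto (fun ε : ℝ => γ ((t : ℂ) + ε * I)) (𝓝[>] 0) (𝓝 (γ₀ t)))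
    (hnonreal : ∀ᵐ t ∂(volume.restrict (Iio lam0)), (γ₀ t).im ≠ 0)
    (hann : ∀ u v : H,
      Tendsto
        (fun ε : ℝ =>
          (inner ℂ
            (cfc (fun z : ℂ =>
              γ ((z.re : ℂ) + ε * I) - conj (γ ((z.re : ℂ) + ε * I))) A u) v : ℂ))
        (𝓝[>] 0) (𝓝 0)) :
    ∀ u : H, ((μ u).restrict (Iio lam0)).MutuallySingular volume := by
  classical
  intro u
  obtain ⟨hfin, hspec⟩ := hμ u
  haveI := hfin
  set μu := μ u with hμu
  obtain ⟨C, hC⟩ := hγ.2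
  have hC0 : 0 ≤ C := le_trans (norm_nonneg (γ I)) (hC I (by simp))
  -- continuity of horizontal slices of `γ`
  have contΓ : ∀ ε : ℝ, 0 < ε → Continuous (fun t : ℝ => γ ((t : ℂ) + ε * I)) := by
    intro ε hε
    have hmap : Continuous (fun t : ℝ => (t : ℂ) + ε * I) := by continuity
    refine hγ.1.continuousOn.comp_continuous hmap fun t => ?_
    simp [Set.mem_setOf_eq, hε]
  -- the abstract spectral-integral identity for functions of the form `z ↦ φ z.re`
  have φlem : ∀ φ : ℝ → ℂ, Continuous φ →
      (inner ℂ (cfc (fun z : ℂ => φ z.re) A u) u : ℂ)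
        = ((∫ t, (φ t).re ∂μu : ℝ) : ℂ) - I * ((∫ t, (φ t).im ∂μu : ℝ) : ℂ) := by
    intro φ hφ
    have hre : Continuous fun t : ℝ => (φ t).re := Complex.continuous_re.comp hφ
    have him : Continuous fun t : ℝ => (φ t).im := Complex.continuous_im.comp hφ
    have h1 : (fun z : ℂ => φ z.re)
        = fun z : ℂ => ((((φ z.re).re : ℝ) : ℂ) + I * (((φ z.re).im : ℝ) : ℂ)) := by
      funext z
      rw [mul_comm]
      exact (Complex.re_add_im (φ z.re)).symm
    have hc1 : Continuous fun z : ℂ => (((φ z.re).re : ℝ) : ℂ) :=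
      Complex.continuous_ofReal.comp (hre.comp Complex.continuous_re)
    have hc2 : Continuous fun z : ℂ => (((φ z.re).im : ℝ) : ℂ) :=
      Complex.continuous_ofReal.comp (him.comp Complex.continuous_re)
    rw [h1, cfc_add (a := A) (fun z : ℂ => (((φ z.re).re : ℝ) : ℂ))
      (fun z : ℂ => I * (((φ z.re).im : ℝ) : ℂ)) hc1.continuousOn ((continuous_const.mul hc2).continuousOn),
      cfc_const_mul I _ A hc2.continuousOn]
    rw [ContinuousLinearMap.add_apply, inner_add_left, ContinuousLinearMap.smul_apply,
      inner_smul_left]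
    rw [← cfc_real_eq_complex (fun t : ℝ => (φ t).re) hA,
      ← cfc_real_eq_complex (fun t : ℝ => (φ t).im) hA]
    rw [hspec _ hre, hspec _ him]
    simp only [Complex.conj_I]
    ring
  -- Step A: the weak annihilation in integral form
  have keyA : ∀ f : ℝ → ℝ, Continuous f →
      Tendsto (fun ε : ℝ => ∫ t, f t * (γ ((t : ℂ) + ε * I)).im ∂μu) (𝓝[>] 0) (𝓝 0) := by
    intro f hf
    have h0 := hann u (cfc f A u)
    have hS : IsSelfAdjoint (cfc f A) := cfc_predicate f A
    have heq : (fun ε : ℝ =>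
        (inner ℂ (cfc (fun z : ℂ =>
            γ ((z.re : ℂ) + ε * I) - conj (γ ((z.re : ℂ) + ε * I))) A u) (cfc f A u) : ℂ))
        =ᶠ[𝓝[>] (0:ℝ)]
        (fun ε : ℝ =>
          (-2 * I) * ((∫ t, f t * (γ ((t : ℂ) + ε * I)).im ∂μu : ℝ) : ℂ)) := by
      filter_upwards [self_mem_nhdsWithin] with ε hε
      have hε' : (0:ℝ) < ε := hε
      have hΓ : Continuous (fun t : ℝ => γ ((t : ℂ) + ε * I)) := contΓ ε hε'
      have hφc : Continuous (fun t : ℝ =>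
          (f t : ℂ) * (γ ((t : ℂ) + ε * I) - conj (γ ((t : ℂ) + ε * I)))) :=
        (Complex.continuous_ofReal.comp hf).mul (hΓ.sub (Complex.continuous_conj.comp hΓ))
      have hGcont : Continuous (fun z : ℂ =>
          γ ((z.re : ℂ) + ε * I) - conj (γ ((z.re : ℂ) + ε * I))) := by
        have := (hΓ.sub (Complex.continuous_conj.comp hΓ)).comp Complex.continuous_re
        exact this
      have step1 : (inner ℂ (cfc (fun z : ℂ =>
            γ ((z.re : ℂ) + ε * I) - conj (γ ((z.re : ℂ) + ε * I))) A u) (cfc f A u) : ℂ)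
          = inner ℂ ((cfc f A * cfc (fun z : ℂ =>
            γ ((z.re : ℂ) + ε * I) - conj (γ ((z.re : ℂ) + ε * I))) A) u) u := by
        have h := ContinuousLinearMap.adjoint_inner_left (𝕜 := ℂ) (cfc f A) u
          ((cfc (fun z : ℂ =>
            γ ((z.re : ℂ) + ε * I) - conj (γ ((z.re : ℂ) + ε * I))) A) u)
        rw [hS.adjoint_eq] at h
        exact h.symm
      have step2 : cfc f A * cfc (fun z : ℂ =>
            γ ((z.re : ℂ) + ε * I) - conj (γ ((z.re : ℂ) + ε * I))) A
          = cfc (fun z : ℂ => ((f z.re : ℝ) : ℂ) *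
              (γ ((z.re : ℂ) + ε * I) - conj (γ ((z.re : ℂ) + ε * I)))) A := by
        rw [cfc_real_eq_complex f hA]
        exact (cfc_mul _ _ A
          ((Complex.continuous_ofReal.comp (hf.comp Complex.continuous_re)).continuousOn)
          hGcont.continuousOn).symm
      rw [step1, step2]
      have step3 := φlem (fun t : ℝ =>
        (f t : ℂ) * (γ ((t : ℂ) + ε * I) - conj (γ ((t : ℂ) + ε * I)))) hφc
      refine step3.trans ?_
      have e1 : (∫ t, ((f t : ℂ) *
          (γ ((t : ℂ) + ε * I) - conj (γ ((t : ℂ) + ε * I)))).re ∂μu) = 0 := by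
        have : (fun t : ℝ => ((f t : ℂ) *
            (γ ((t : ℂ) + ε * I) - conj (γ ((t : ℂ) + ε * I)))).re) = fun _ => (0:ℝ) := by
          funext t
          simp [Complex.re_ofReal_mul, Complex.sub_re, Complex.conj_re]
        rw [this, integral_zero]
      have e2 : (∫ t, ((f t : ℂ) *
          (γ ((t : ℂ) + ε * I) - conj (γ ((t : ℂ) + ε * I)))).im ∂μu)
          = 2 * ∫ t, f t * (γ ((t : ℂ) + ε * I)).im ∂μu := by
        have : (fun t : ℝ => ((f t : ℂ) *
            (γ ((t : ℂ) + ε * I) - conj (γ ((t : ℂ) + ε * I)))).im)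
            = fun t : ℝ => 2 * (f t * (γ ((t : ℂ) + ε * I)).im) := by
          funext t
          simp [Complex.im_ofReal_mul, Complex.sub_im, Complex.conj_im]
          ring
        rw [this]
        exact integral_const_mul 2 _
      rw [e1, e2]
      push_cast
      ring
    have h1 := h0.congr' heq
    have hc : (-2 * I : ℂ) ≠ 0 := mul_ne_zero (by norm_num) Complex.I_ne_zero
    have h2 : Tendsto (fun ε : ℝ =>
        ((∫ t, f t * (γ ((t : ℂ) + ε * I)).im ∂μu : ℝ) : ℂ)) (𝓝[>] 0) (𝓝 0) := by
      have h3 := h1.const_mul ((-2 * I : ℂ)⁻¹)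
      simp only [← mul_assoc, inv_mul_cancel₀ hc, one_mul, mul_zero] at h3
      exact h3
    have h4 := (Complex.continuous_re.tendsto 0).comp h2
    simpa [Function.comp_def] using h4
  -- boundary data
  have hγ₀meas : AEStronglyMeasurable γ₀ (volume : Measure ℝ) := by
    have hseq : Tendsto (fun n : ℕ => (1 : ℝ) / (n + 1)) atTop (𝓝[>] (0:ℝ)) := by
      rw [tendsto_nhdsWithin_iff]
      exact ⟨tendsto_one_div_add_atTop_nhds_zero_nat,
        Eventually.of_forall fun n => Set.mem_Ioi.mpr (by positivity)⟩
    refine aestronglyMeasurable_of_tendsto_ae atTop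
      (f := fun n : ℕ => fun t : ℝ => γ ((t : ℂ) + ((1:ℝ)/(n+1) : ℝ) * I)) ?_ ?_
    · intro n
      exact (contΓ _ (by positivity)).aestronglyMeasurable
    · filter_upwards [hconv] with t ht
      exact ht.comp hseq
  have hγ₀bdd : ∀ᵐ t : ℝ, ‖γ₀ t‖ ≤ C := by
    filter_upwards [hconv] with t ht
    refine le_of_tendsto ht.norm ?_
    filter_upwards [self_mem_nhdsWithin] with ε hε
    refine hC _ ?_
    simpa using (hε : (0:ℝ) < ε)
  -- measures
  set w := μu.rnDeriv volume with hw
  set μs := μu.singularPart volume with hμs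
  set ν := volume.withDensity w with hν
  haveI : IsFiniteMeasure ν := by
    rw [hν, hw]; infer_instance
  have hdecomp : μs + ν = μu := μu.singularPart_add_rnDeriv volume
  have hνac : ν ≪ volume := withDensity_absolutelyContinuous _ _
  set hfun : ℝ → ℝ := fun t => (γ₀ t).im * (w t).toReal with hfundef
  have hwint : Integrable (fun t => (w t).toReal) volume :=
    Measure.integrable_toReal_rnDeriv
  have hfunmeas : AEStronglyMeasurable hfun volume :=
    (Complex.continuous_im.comp_aestronglyMeasurable hγ₀meas).mul
      ((Measure.measurable_rnDeriv μu volume).ennreal_toReal.aestronglyMeasurable)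
  have hfun_int : Integrable hfun volume := by
    refine (hwint.const_mul C).mono' hfunmeas ?_
    filter_upwards [hγ₀bdd] with t ht
    rw [hfundef]
    simp only [Real.norm_eq_abs, abs_mul, _root_.abs_of_nonneg ENNReal.toReal_nonneg]
    refine mul_le_mul_of_nonneg_right ?_ ENNReal.toReal_nonneg
    exact le_trans (Complex.abs_im_le_norm _) ht
  -- generic integrability of bounded continuous functions
  have integ_of_bdd : ∀ (ρ : Measure ℝ) [IsFiniteMeasure ρ] (F : ℝ → ℝ) (_ : Continuous F)
      (M : ℝ) (_ : ∀ t, |F t| ≤ M), Integrable F ρ := by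
    intro ρ _ F hFc M hM
    refine (integrable_const M).mono' hFc.aestronglyMeasurable ?_
    exact Eventually.of_forall fun t => by simpa using hM t
  -- the fundamental inequality
  have keyIneq : ∀ f : ℝ → ℝ, Continuous f → ∀ M : ℝ, (∀ t, |f t| ≤ M) →
      |∫ t, f t * hfun t ∂volume| ≤ C * ∫ t, |f t| ∂μs := by
    intro f hf M hM
    have hM0 : 0 ≤ M := le_trans (abs_nonneg _) (hM 0)
    -- the ε-family of integrands
    have hqc : ∀ ε : ℝ, 0 < ε → Continuous (fun t => f t * (γ ((t : ℂ) + ε * I)).im) :=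
      fun ε hε => hf.mul (Complex.continuous_im.comp (contΓ ε hε))
    have hqb : ∀ ε : ℝ, 0 < ε → ∀ t, |f t * (γ ((t : ℂ) + ε * I)).im| ≤ M * C := by
      intro ε hε t
      rw [abs_mul]
      refine mul_le_mul (hM t) ?_ (abs_nonneg _) hM0
      refine le_trans (Complex.abs_im_le_norm _) (hC _ ?_)
      simpa using hε
    have hint_s : ∀ ε : ℝ, 0 < ε →
        Integrable (fun t => f t * (γ ((t : ℂ) + ε * I)).im) μs :=
      fun ε hε => integ_of_bdd μs _ (hqc ε hε) (M*C) (hqb ε hε)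
    have hint_ν : ∀ ε : ℝ, 0 < ε →
        Integrable (fun t => f t * (γ ((t : ℂ) + ε * I)).im) ν :=
      fun ε hε => integ_of_bdd ν _ (hqc ε hε) (M*C) (hqb ε hε)
    have hsplit : ∀ ε : ℝ, 0 < ε →
        ∫ t, f t * (γ ((t : ℂ) + ε * I)).im ∂μu
          = (∫ t, f t * (γ ((t : ℂ) + ε * I)).im ∂μs)
            + ∫ t, f t * (γ ((t : ℂ) + ε * I)).im ∂ν := by
      intro ε hε
      rw [← hdecomp]
      exact integral_add_measure (hint_s ε hε) (hint_ν ε hε)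
    -- a.c. part converges by dominated convergence
    have hAC : Tendsto (fun ε : ℝ => ∫ t, f t * (γ ((t : ℂ) + ε * I)).im ∂ν) (𝓝[>] 0)
        (𝓝 (∫ t, f t * (γ₀ t).im ∂ν)) := by
      refine tendsto_integral_filter_of_dominated_convergence (fun _ => M * C) ?_ ?_
        (integrable_const _) ?_
      · filter_upwards [self_mem_nhdsWithin] with ε hε
        exact (hqc ε hε).aestronglyMeasurable
      · filter_upwards [self_mem_nhdsWithin] with ε hε
        exact Eventually.of_forall fun t => by
          rw [Real.norm_eq_abs]; exact hqb ε hε t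
      · have := hνac.ae_le hconv
        filter_upwards [this] with t ht
        exact (Complex.continuous_im.tendsto _).comp ht |>.const_mul (f t)
    -- hence the singular part converges as well
    have hSing : Tendsto (fun ε : ℝ => ∫ t, f t * (γ ((t : ℂ) + ε * I)).im ∂μs) (𝓝[>] 0)
        (𝓝 (0 - ∫ t, f t * (γ₀ t).im ∂ν)) := by
      refine Tendsto.congr' ?_ ((keyA f hf).sub hAC)
      filter_upwards [self_mem_nhdsWithin] with ε hε
      rw [hsplit ε hε]
      ring
    -- pass to the limit in the obvious bound
    have hbound : ∀ᶠ ε : ℝ in 𝓝[>] 0,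
        |∫ t, f t * (γ ((t : ℂ) + ε * I)).im ∂μs| ≤ C * ∫ t, |f t| ∂μs := by
      filter_upwards [self_mem_nhdsWithin] with ε hε
      have h1 : |∫ t, f t * (γ ((t : ℂ) + ε * I)).im ∂μs|
          ≤ ∫ t, |f t * (γ ((t : ℂ) + ε * I)).im| ∂μs := by
        have := norm_integral_le_integral_norm (μ := μs)
          (fun t => f t * (γ ((t : ℂ) + ε * I)).im)
        simp only [Real.norm_eq_abs] at this
        exact this
      refine h1.trans ?_
      have h2 : ∫ t, |f t * (γ ((t : ℂ) + ε * I)).im| ∂μs ≤ ∫ t, C * |f t| ∂μs := by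
        refine integral_mono ((hint_s ε hε).abs) ?_ ?_
        · exact (integ_of_bdd μs _ hf.abs M (fun t => by simpa [_root_.abs_abs] using hM t)).const_mul C
        · intro t
          show |f t * (γ ((t : ℂ) + ε * I)).im| ≤ C * |f t|
          rw [abs_mul, mul_comm]
          refine mul_le_mul_of_nonneg_right ?_ (abs_nonneg _)
          refine le_trans (Complex.abs_im_le_norm _) (hC _ ?_)
          simpa using (hε : (0:ℝ) < ε)
      refine h2.trans ?_
      rw [integral_const_mul]
    have habs : Tendsto (fun ε : ℝ => |∫ t, f t * (γ ((t : ℂ) + ε * I)).im ∂μs|) (𝓝[>] 0)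
        (𝓝 |0 - ∫ t, f t * (γ₀ t).im ∂ν|) := (_root_.continuous_abs.tendsto _).comp hSing
    have hfinal : |0 - ∫ t, f t * (γ₀ t).im ∂ν| ≤ C * ∫ t, |f t| ∂μs :=
      le_of_tendsto habs hbound
    rw [zero_sub, abs_neg] at hfinal
    -- rewrite the ν-integral as a volume integral against hfun
    have hRw : ∫ t, f t * (γ₀ t).im ∂ν = ∫ t, f t * hfun t ∂volume := by
      have h2 := integral_rnDeriv_smul (μ := ν) (ν := (volume : Measure ℝ)) hνac
        (f := fun t => f t * (γ₀ t).im)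
      rw [← h2]
      refine integral_congr_ae ?_
      have h3 : ν.rnDeriv volume =ᵐ[volume] w :=
        Measure.rnDeriv_withDensity volume (Measure.measurable_rnDeriv μu volume)
      filter_upwards [h3] with t ht
      rw [ht, smul_eq_mul, hfundef]
      ring
    rwa [hRw] at hfinal
  -- conclude: hfun vanishes a.e.
  have hzero : ∀ᵐ t : ℝ, hfun t = 0 := by
    refine ae_eq_zero_of_integral_contDiff_smul_eq_zero hfun_int.locallyIntegrable ?_
    intro g hg hgsupp
    have hgc : Continuous g := hg.continuous
    obtain ⟨M, hM⟩ : ∃ M : ℝ, ∀ x, |g x| ≤ M := by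
      obtain ⟨M0, hM0⟩ := hgsupp.isCompact.exists_bound_of_continuousOn hgc.continuousOn
      refine ⟨max M0 0, fun x => ?_⟩
      by_cases hx : x ∈ tsupport g
      · exact le_trans (by simpa [Real.norm_eq_abs] using hM0 x hx) (le_max_left _ _)
      · simp [image_eq_zero_of_notMem_tsupport hx, le_max_right]
    have hM0 : 0 ≤ M := le_trans (abs_nonneg _) (hM 0)
    by_contra hne0
    have hRpos : 0 < |∫ t, g t • hfun t ∂volume| := abs_pos.mpr hne0
    set R := |∫ t, g t • hfun t ∂volume| with hRdef
    set η := R / (C * M + M + 1) with hηdef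
    have hden : 0 < C * M + M + 1 := by positivity
    have hηpos : 0 < η := div_pos hRpos hden
    -- choose the singular carrier
    obtain ⟨S, hSm, hS0, hSc0⟩ := Measure.mutuallySingular_singularPart μu volume
    have hZm : MeasurableSet Sᶜ := hSm.compl
    have hvolZ : volume Sᶜ = 0 := hSc0
    have hμsZc : μs Sᶜᶜ = 0 := by rwa [compl_compl]
    have hηE : (ENNReal.ofReal η) ≠ 0 := by
      simpa [ENNReal.ofReal_eq_zero, not_le] using hηpos
    obtain ⟨K, hKZ, hKcomp, hKlt⟩ :=
      hZm.exists_isCompact_lt_add (measure_ne_top μs _) hηE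
    have hKm : MeasurableSet K := hKcomp.isClosed.measurableSet
    have hdiffK : μs (Sᶜ \ K) < ENNReal.ofReal η :=
      measure_diff_lt_of_lt_add hKm.nullMeasurableSet hKZ (measure_ne_top _ _) hKlt
    have hKc : μs Kᶜ < ENNReal.ofReal η := by
      refine lt_of_le_of_lt ?_ hdiffK
      have hsub : Kᶜ ⊆ (Sᶜ \ K) ∪ Sᶜᶜ := by
        intro t ht
        by_cases h : t ∈ Sᶜ
        · exact Or.inl ⟨h, ht⟩
        · exact Or.inr h
      calc μs Kᶜ ≤ μs ((Sᶜ \ K) ∪ Sᶜᶜ) := measure_mono hsub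
        _ ≤ μs (Sᶜ \ K) + μs Sᶜᶜ := measure_union_le _ _
        _ = μs (Sᶜ \ K) := by rw [hμsZc, add_zero]
    have hvolK : volume K = 0 := measure_mono_null hKZ hvolZ
    -- choose δ controlling the integral of ‖hfun‖ on small sets
    obtain ⟨δ, hδ0, hδ⟩ := exists_pos_setLIntegral_lt_of_measure_lt
      (μ := (volume : Measure ℝ)) (f := fun t => (‖hfun t‖₊ : ℝ≥0∞)) hfun_int.2.ne hηE
    obtain ⟨V, hKV, hVopen, hVlt⟩ := Set.exists_isOpen_lt_of_lt K δ (by rw [hvolK]; exact hδ0)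
    have hVm : MeasurableSet V := hVopen.measurableSet
    -- Urysohn function
    obtain ⟨χ, hχ0, hχ1, hχ01⟩ := exists_continuous_zero_one_of_isCompact' hKcomp
      hVopen.isClosed_compl (Set.disjoint_left.mpr fun x hxK hxVc => hxVc (hKV hxK))
    set f : ℝ → ℝ := fun t => g t * (1 - χ t) with hfdef
    have hfc : Continuous f := hgc.mul (continuous_const.sub χ.continuous)
    have hfb : ∀ t, |f t| ≤ M := by
      intro t
      rw [hfdef]
      simp only
      rw [abs_mul]
      calc |g t| * |1 - χ t| ≤ M * 1 := by
            refine mul_le_mul (hM t) ?_ (abs_nonneg _) hM0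
            have h1 := (hχ01 t).1
            have h2 := (hχ01 t).2
            rw [abs_le]; constructor <;> linarith
        _ = M := mul_one M
    -- the key inequality for f
    have hkey := keyIneq f hfc M hfb
    -- bound the μs-integral of |f|
    have hμsf : ∫ t, |f t| ∂μs ≤ M * η := by
      have hind : ∀ t, |f t| ≤ Kᶜ.indicator (fun _ => M) t := by
        intro t
        by_cases ht : t ∈ K
        · have hχt : χ t = 1 := hχ1 ht
          have : f t = 0 := by rw [hfdef]; simp [hχt]
          rw [this]
          simp [Set.indicator_of_notMem (by simpa using ht : t ∉ Kᶜ)]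
        · rw [Set.indicator_of_mem (by simpa using ht : t ∈ Kᶜ)]
          exact hfb t
      have h2 : ∫ t, |f t| ∂μs ≤ ∫ t, Kᶜ.indicator (fun _ => M) t ∂μs := by
        refine integral_mono (integ_of_bdd μs _ hfc.abs M
          (fun t => by simpa [_root_.abs_abs] using hfb t)) ?_ hind
        exact (integrable_const M).indicator hKm.compl
      have h3 : ∫ t, Kᶜ.indicator (fun _ => M) t ∂μs = (μs Kᶜ).toReal • M :=
        integral_indicator_const M hKm.compl
      have h4 : (μs Kᶜ).toReal ≤ η :=
        ENNReal.toReal_le_of_le_ofReal hηpos.le hKc.le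
      rw [h3] at h2
      refine h2.trans ?_
      rw [smul_eq_mul, mul_comm]
      exact mul_le_mul_of_nonneg_left h4 hM0
    -- integrability facts
    have hgh : Integrable (fun t => g t * hfun t) volume :=
      hfun_int.bdd_mul (c := M) hgc.aestronglyMeasurable (Eventually.of_forall fun x => by simpa using hM x)
    have hfh : Integrable (fun t => f t * hfun t) volume :=
      hfun_int.bdd_mul (c := M) hfc.aestronglyMeasurable (Eventually.of_forall fun x => by simpa using hfb x)
    have hχh : Integrable (fun t => (g t * χ t) * hfun t) volume := by
      refine hfun_int.bdd_mul (c := M) (hgc.mul χ.continuous).aestronglyMeasurable (Eventually.of_forall fun x => ?_)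
      have h1 := (hχ01 x).1
      have h2 := (hχ01 x).2
      rw [Real.norm_eq_abs, abs_mul]
      calc |g x| * |χ x| ≤ M * 1 := by
            refine mul_le_mul (hM x) ?_ (abs_nonneg _) hM0
            rw [abs_le]; constructor <;> linarith
        _ = M := mul_one M
    -- split the integral
    have hsplit2 : ∫ t, g t • hfun t ∂volume
        = (∫ t, f t * hfun t ∂volume) + ∫ t, (g t * χ t) * hfun t ∂volume := by
      rw [← integral_add hfh hχh]
      refine integral_congr_ae (Eventually.of_forall fun t => ?_)
      simp only [smul_eq_mul, hfdef]
      ring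
    -- bound the χ-part
    have hχbound : |∫ t, (g t * χ t) * hfun t ∂volume| ≤ M * η := by
      have h1 : |∫ t, (g t * χ t) * hfun t ∂volume|
          ≤ ∫ t, |(g t * χ t) * hfun t| ∂volume := by
        have := norm_integral_le_integral_norm (μ := (volume : Measure ℝ))
          (fun t => (g t * χ t) * hfun t)
        simp only [Real.norm_eq_abs] at this
        exact this
      refine h1.trans ?_
      have h2 : ∀ t, |(g t * χ t) * hfun t| ≤ V.indicator (fun s => M * |hfun s|) t := by
        intro t
        by_cases ht : t ∈ V
        · rw [Set.indicator_of_mem ht]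
          rw [abs_mul, abs_mul]
          refine mul_le_mul_of_nonneg_right ?_ (abs_nonneg _)
          calc |g t| * |χ t| ≤ M * 1 := by
                refine mul_le_mul (hM t) ?_ (abs_nonneg _) hM0
                have h1' := (hχ01 t).1
                have h2' := (hχ01 t).2
                rw [abs_le]; constructor <;> linarith
            _ = M := mul_one M
        · have hχt : χ t = 0 := hχ0 (by simpa using ht)
          rw [Set.indicator_of_notMem ht]
          simp [hχt]
      have hVint : Integrable (V.indicator (fun s => M * |hfun s|)) volume :=
        ((hfun_int.abs.const_mul M).indicator hVm)
      have h3 : ∫ t, |(g t * χ t) * hfun t| ∂volume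
          ≤ ∫ t, V.indicator (fun s => M * |hfun s|) t ∂volume := by
        refine integral_mono hχh.abs hVint h2
      refine h3.trans ?_
      rw [integral_indicator hVm]
      have h4 : ∫ t in V, M * |hfun t| ∂volume = M * ∫ t in V, |hfun t| ∂volume :=
        integral_const_mul M _
      rw [h4]
      refine mul_le_mul_of_nonneg_left ?_ hM0
      have h5 : ∫ t in V, |hfun t| ∂volume
          = (∫⁻ t in V, (‖hfun t‖₊ : ℝ≥0∞) ∂volume).toReal := by
        exact
          integral_norm_eq_lintegral_enorm (hfunmeas.restrict (s := V))
      rw [h5]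
      exact ENNReal.toReal_le_of_le_ofReal hηpos.le (hδ V hVlt).le
    -- put everything together
    have hfinal : R ≤ (C * M + M) * η := by
      rw [hRdef, hsplit2]
      calc |(∫ t, f t * hfun t ∂volume) + ∫ t, (g t * χ t) * hfun t ∂volume|
          ≤ |∫ t, f t * hfun t ∂volume| + |∫ t, (g t * χ t) * hfun t ∂volume| :=
            abs_add_le _ _
        _ ≤ C * (M * η) + M * η := by
            refine add_le_add (hkey.trans ?_) hχbound
            exact mul_le_mul_of_nonneg_left hμsf hC0
        _ = (C * M + M) * η := by ring
    have hlt : (C * M + M) * η < R := by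
      rw [hηdef]
      rw [div_eq_inv_mul, ← mul_assoc]
      have h1 : (C * M + M) * (C * M + M + 1)⁻¹ < 1 := by
        rw [mul_inv_lt_iff₀ hden, one_mul]
        linarith
      calc (C * M + M) * (C * M + M + 1)⁻¹ * R < 1 * R :=
            (mul_lt_mul_of_pos_right h1 hRpos)
        _ = R := one_mul R
    exact absurd (hfinal.trans_lt hlt) (lt_irrefl R)
  -- now deduce that the a.c. part vanishes on (−∞, lam0)
  have hwzero : ∀ᵐ t ∂(volume.restrict (Iio lam0)), w t = 0 := by
    have h1 : ∀ᵐ t ∂(volume.restrict (Iio lam0)), hfun t = 0 := ae_restrict_of_ae hzero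
    have h2 : ∀ᵐ t ∂(volume.restrict (Iio lam0)), w t < ⊤ :=
      ae_restrict_of_ae (μu.rnDeriv_lt_top volume)
    filter_upwards [h1, h2, hnonreal] with t ht hlt hnr
    rw [hfundef] at ht
    simp only at ht
    rcases mul_eq_zero.mp ht with h | h
    · exact absurd h hnr
    · rw [ENNReal.toReal_eq_zero_iff] at h
      rcases h with h | h
      · exact h
      · exact absurd h (ne_of_lt hlt)
  have hν0 : ν (Iio lam0) = 0 := by
    rw [hν, withDensity_apply _ measurableSet_Iio]
    calc ∫⁻ t in Iio lam0, w t ∂volume = ∫⁻ t in Iio lam0, 0 ∂volume :=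
          lintegral_congr_ae hwzero
      _ = 0 := lintegral_zero
  have hrestr : μu.restrict (Iio lam0) = μs.restrict (Iio lam0) := by
    conv_lhs => rw [← hdecomp]
    rw [Measure.restrict_add, Measure.restrict_eq_zero.mpr hν0, add_zero]
  rw [hrestr]
  exact (Measure.mutuallySingular_singularPart μu volume).mono
    (Measure.restrict_le_self) le_rfl
end
end

section
/- Let H be a complex Hilbert space and A a bounded self-adjoint operator on H. Let b : ℝ → ℝ be a nonnegative, continuously differentiable function such that b and b' are bounded and Lebesgue integrable, and let β(λ) = ∫_ℝ b(k)/(k−λ) dk for Im λ > 0. For ε > 0 define f_ε(t) = β(t+iε) − conj(β(t+iε)) (corresponding to β(A+iε) − β_*(A−iε) with β_*(λ) = conj(β(conj λ))). Then f_ε(A) converges strongly, as ε ↓ 0, to g(A), where g(t) = 2πi·b(t); that is, ‖f_ε(A)u − g(A)u‖ → 0 for every u ∈ H, where f_ε(A) and g(A) are given by the continuous functional calculus. -/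
open MeasureTheory Complex Filter Topology Set ComplexConjugate
open scoped ENNReal

noncomputable section

variable {H : Type*} [NormedAddCommGroup H] [InnerProductSpace ℂ H] [CompleteSpace H]

/-- The Riesz (Cauchy) transform `β(λ) = ∫ b(k)/(k − λ) dk` of a real function `b`. -/
def cauchyTransform (b : ℝ → ℝ) (lam : ℂ) : ℂ :=
  ∫ k : ℝ, (b k : ℂ) / ((k : ℂ) - lam)


section Aux

open MeasureTheory

lemma aux_poisson_eq {ε : ℝ} (hε : 0 < ε) (s : ℝ) :
    ε / (s ^ 2 + ε ^ 2) = ε⁻¹ * (1 + (ε⁻¹ * s) ^ 2)⁻¹ := by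
  have h : (0:ℝ) < s ^ 2 + ε ^ 2 := by positivity
  field_simp
  ring

lemma aux_poisson_integrable {ε : ℝ} (hε : 0 < ε) :
    Integrable fun s : ℝ => ε / (s ^ 2 + ε ^ 2) := by
  have h1 : Integrable fun s : ℝ => (1 + (ε⁻¹ * s) ^ 2)⁻¹ := by
    exact (integrable_comp_mul_left_iff (fun x : ℝ => (1 + x ^ 2)⁻¹)
      (inv_ne_zero hε.ne')).mpr integrable_inv_one_add_sq
  exact ((h1.const_mul ε⁻¹).congr
    (Filter.Eventually.of_forall fun s => (aux_poisson_eq hε s).symm))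

lemma aux_poisson_integral {ε : ℝ} (hε : 0 < ε) :
    (∫ s : ℝ, ε / (s ^ 2 + ε ^ 2)) = Real.pi := by
  calc (∫ s : ℝ, ε / (s ^ 2 + ε ^ 2))
      = ∫ s : ℝ, ε⁻¹ * (1 + (ε⁻¹ * s) ^ 2)⁻¹ := by
        exact integral_congr_ae (Filter.Eventually.of_forall fun s => aux_poisson_eq hε s)
    _ = ε⁻¹ * ∫ s : ℝ, (1 + (ε⁻¹ * s) ^ 2)⁻¹ := integral_const_mul _ _
    _ = ε⁻¹ * (|ε⁻¹⁻¹| • ∫ x : ℝ, (1 + x ^ 2)⁻¹) := by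
        rw [Measure.integral_comp_mul_left (fun x : ℝ => (1 + x ^ 2)⁻¹) ε⁻¹]
    _ = Real.pi := by
        rw [integral_univ_inv_one_add_sq, inv_inv, abs_of_pos hε, smul_eq_mul]
        field_simp

lemma aux_denom_ne_zero {ε : ℝ} (hε : 0 < ε) (t k : ℝ) :
    ((k : ℂ) - ((t : ℂ) + ε * I)) ≠ 0 := by
  intro h
  have := congrArg Complex.im h
  simp at this
  linarith

lemma aux_norm_le {ε : ℝ} (hε : 0 < ε) (b : ℝ → ℝ) (t k : ℝ) :
    ‖(b k : ℂ) / ((k : ℂ) - ((t : ℂ) + ε * I))‖ ≤ |b k| * ε⁻¹ := by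
  rw [norm_div, Complex.norm_real, ← div_eq_mul_inv, Real.norm_eq_abs]
  have h1 : ε ≤ ‖(k : ℂ) - ((t : ℂ) + ε * I)‖ := by
    have h2 : |((k : ℂ) - ((t : ℂ) + ε * I)).im| ≤ ‖(k : ℂ) - ((t : ℂ) + ε * I)‖ :=
      Complex.abs_im_le_norm _
    have h3 : ((k : ℂ) - ((t : ℂ) + ε * I)).im = -ε := by simp
    rw [h3, abs_neg, abs_of_pos hε] at h2
    exact h2
  gcongr


lemma aux_cauchy_integrable (b : ℝ → ℝ) (hbint : Integrable b) (hbcont : Continuous b)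
    {ε : ℝ} (hε : 0 < ε) (t : ℝ) :
    Integrable fun k : ℝ => (b k : ℂ) / ((k : ℂ) - ((t : ℂ) + ε * I)) := by
  refine (hbint.abs.mul_const ε⁻¹).mono' ?_ ?_
  · refine Continuous.aestronglyMeasurable ?_
    exact (Complex.continuous_ofReal.comp hbcont).div (by continuity)
      (fun k => aux_denom_ne_zero hε t k)
  · exact Filter.Eventually.of_forall fun k => aux_norm_le hε b t k

lemma aux_im (b : ℝ → ℝ) (ε t k : ℝ) :
    ((b k : ℂ) / ((k : ℂ) - ((t : ℂ) + ε * I))).im = b k * (ε / ((k - t) ^ 2 + ε ^ 2)) := by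
  rw [Complex.div_im]
  simp [Complex.normSq_apply]
  rw [show (k - t) * (k - t) + ε * ε = (k - t) ^ 2 + ε ^ 2 by ring]
  rw [neg_div, neg_neg, mul_div_assoc]

lemma aux_key (b : ℝ → ℝ) (M L : ℝ) (hM : ∀ t, |b t| ≤ M)
    (hL : ∀ x y : ℝ, |b x - b y| ≤ L * |x - y|)
    (hbint : Integrable b) (hbcont : Continuous b) {ε : ℝ} (hε : 0 < ε) (t : ℝ) :
    |(cauchyTransform b ((t : ℂ) + ε * I)).im - Real.pi * b t| ≤
      ∫ x : ℝ, min (2 * M) (L * (ε * |x|)) / (1 + x ^ 2) := by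
  have hM0 : 0 ≤ M := le_trans (abs_nonneg _) (hM 0)
  have hL0 : 0 ≤ L := by
    have := hL 1 0
    simp at this
    nlinarith [abs_nonneg (b 1 - b 0)]
  have hker_int : Integrable fun k : ℝ => ε / ((k - t) ^ 2 + ε ^ 2) := by
    exact (aux_poisson_integrable hε).comp_sub_right t
  have hker_nonneg : ∀ k : ℝ, 0 ≤ ε / ((k - t) ^ 2 + ε ^ 2) := fun k => by positivity
  have hker_cont : Continuous fun k : ℝ => ε / ((k - t) ^ 2 + ε ^ 2) := by
    apply continuous_const.div (by continuity)
    intro k; positivity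
  have h1 : Integrable fun k : ℝ => b k * (ε / ((k - t) ^ 2 + ε ^ 2)) := by
    refine (hker_int.const_mul M).mono' ((hbcont.mul hker_cont).aestronglyMeasurable) ?_
    refine Filter.Eventually.of_forall fun k => ?_
    rw [Real.norm_eq_abs, abs_mul, _root_.abs_of_nonneg (hker_nonneg k)]
    exact mul_le_mul_of_nonneg_right (hM k) (hker_nonneg k)
  have h1' : Integrable fun k : ℝ => b t * (ε / ((k - t) ^ 2 + ε ^ 2)) :=
    hker_int.const_mul (b t)
  have hkerint : (∫ k : ℝ, ε / ((k - t) ^ 2 + ε ^ 2)) = Real.pi := by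
    rw [show (fun k : ℝ => ε / ((k - t) ^ 2 + ε ^ 2)) =
        (fun k : ℝ => (fun s : ℝ => ε / (s ^ 2 + ε ^ 2)) (k - t)) from rfl]
    rw [integral_sub_right_eq_self (fun s : ℝ => ε / (s ^ 2 + ε ^ 2)) t]
    exact aux_poisson_integral hε
  have h2 : (cauchyTransform b ((t : ℂ) + ε * I)).im =
      ∫ k : ℝ, b k * (ε / ((k - t) ^ 2 + ε ^ 2)) := by
    have hii := integral_im (μ := (volume : Measure ℝ))
      (aux_cauchy_integrable b hbint hbcont hε t)
    rw [RCLike.im_eq_complex_im] at hii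
    rw [cauchyTransform, ← hii]
    exact integral_congr_ae (Filter.Eventually.of_forall fun k => aux_im b ε t k)
  have h3 : Real.pi * b t = ∫ k : ℝ, b t * (ε / ((k - t) ^ 2 + ε ^ 2)) := by
    rw [integral_const_mul, hkerint, mul_comm]
  rw [h2, h3, ← integral_sub h1 h1']
  have h4 : (fun k : ℝ => b k * (ε / ((k - t) ^ 2 + ε ^ 2)) -
      b t * (ε / ((k - t) ^ 2 + ε ^ 2))) =
      fun k : ℝ => (b k - b t) * (ε / ((k - t) ^ 2 + ε ^ 2)) := by
    funext k; ring
  rw [h4]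
  have hbound_cont : Continuous fun k : ℝ => min (2 * M) (L * |k - t|) *
      (ε / ((k - t) ^ 2 + ε ^ 2)) := by
    exact (continuous_const.min ((continuous_const.mul
      ((continuous_id.sub continuous_const).abs)))).mul hker_cont
  have hbound_int : Integrable fun k : ℝ => min (2 * M) (L * |k - t|) *
      (ε / ((k - t) ^ 2 + ε ^ 2)) := by
    refine (hker_int.const_mul (2 * M)).mono' hbound_cont.aestronglyMeasurable ?_
    refine Filter.Eventually.of_forall fun k => ?_
    rw [Real.norm_eq_abs, abs_mul, _root_.abs_of_nonneg (hker_nonneg k),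
      _root_.abs_of_nonneg (le_min (by positivity) (by positivity))]
    exact mul_le_mul_of_nonneg_right (min_le_left _ _) (hker_nonneg k)
  have h5 : |∫ k : ℝ, (b k - b t) * (ε / ((k - t) ^ 2 + ε ^ 2))| ≤
      ∫ k : ℝ, min (2 * M) (L * |k - t|) * (ε / ((k - t) ^ 2 + ε ^ 2)) := by
    rw [← Real.norm_eq_abs]
    refine norm_integral_le_of_norm_le hbound_int ?_
    refine Filter.Eventually.of_forall fun k => ?_
    rw [Real.norm_eq_abs, abs_mul, _root_.abs_of_nonneg (hker_nonneg k)]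
    refine mul_le_mul_of_nonneg_right ?_ (hker_nonneg k)
    refine le_min ?_ (hL k t)
    calc |b k - b t| ≤ |b k| + |b t| := abs_sub _ _
      _ ≤ M + M := add_le_add (hM k) (hM t)
      _ = 2 * M := by ring
  refine h5.trans (le_of_eq ?_)
  -- substitution:  shift by t, then scale by ε
  rw [show (fun k : ℝ => min (2 * M) (L * |k - t|) * (ε / ((k - t) ^ 2 + ε ^ 2))) =
      (fun k : ℝ => (fun s : ℝ => min (2 * M) (L * |s|) * (ε / (s ^ 2 + ε ^ 2))) (k - t))
      from rfl]
  rw [integral_sub_right_eq_self (fun s : ℝ => min (2 * M) (L * |s|) * (ε / (s ^ 2 + ε ^ 2))) t]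
  have h6 : ∀ s : ℝ, min (2 * M) (L * |s|) * (ε / (s ^ 2 + ε ^ 2)) =
      ε⁻¹ * ((fun x : ℝ => min (2 * M) (L * (ε * |x|)) / (1 + x ^ 2)) (ε⁻¹ * s)) := by
    intro s
    have habs : L * (ε * |ε⁻¹ * s|) = L * |s| := by
      rw [abs_mul, abs_inv, abs_of_pos hε]
      field_simp
    simp only []
    rw [habs]
    have hden : (0:ℝ) < s ^ 2 + ε ^ 2 := by positivity
    have hden2 : (0:ℝ) < 1 + (ε⁻¹ * s) ^ 2 := by positivity
    field_simp
    ring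
  rw [integral_congr_ae (Filter.Eventually.of_forall h6), integral_const_mul,
    Measure.integral_comp_mul_left (fun x : ℝ => min (2 * M) (L * (ε * |x|)) / (1 + x ^ 2)) ε⁻¹,
    inv_inv, abs_of_pos hε, smul_eq_mul, ← mul_assoc, inv_mul_cancel₀ hε.ne', one_mul]

lemma aux_phi_nonneg (M L : ℝ) (hM : 0 ≤ M) (hL : 0 ≤ L) {ε : ℝ} (hε : 0 < ε) :
    0 ≤ ∫ x : ℝ, min (2 * M) (L * (ε * |x|)) / (1 + x ^ 2) := by
  refine integral_nonneg fun x => ?_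
  have h1 : 0 ≤ min (2 * M) (L * (ε * |x|)) := le_min (by positivity) (by positivity)
  positivity

lemma aux_phi_tendsto (M L : ℝ) (hM : 0 ≤ M) (hL : 0 ≤ L) :
    Filter.Tendsto (fun ε : ℝ => ∫ x : ℝ, min (2 * M) (L * (ε * |x|)) / (1 + x ^ 2))
      (nhdsWithin 0 (Set.Ioi 0)) (nhds 0) := by
  have hbd : Integrable fun x : ℝ => 2 * M * (1 + x ^ 2)⁻¹ :=
    integrable_inv_one_add_sq.const_mul (2 * M)
  have h := tendsto_integral_filter_of_dominated_convergence
    (μ := (volume : Measure ℝ)) (l := nhdsWithin (0:ℝ) (Set.Ioi 0))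
    (F := fun (ε : ℝ) (x : ℝ) =>
      min (2 * M) (L * (ε * |x|)) / (1 + x ^ 2)) (f := fun _ : ℝ => (0:ℝ))
    (bound := fun x : ℝ => 2 * M * (1 + x ^ 2)⁻¹) ?_ ?_ hbd ?_
  · simpa using h
  · refine Filter.Eventually.of_forall fun ε => ?_
    refine Continuous.aestronglyMeasurable ?_
    refine Continuous.div (continuous_const.min (by continuity)) (by continuity) ?_
    intro x; positivity
  · filter_upwards [self_mem_nhdsWithin] with ε (hε : ε ∈ Set.Ioi 0)
    refine Filter.Eventually.of_forall fun x => ?_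
    have hεpos : (0:ℝ) < ε := hε
    have h1 : 0 ≤ min (2 * M) (L * (ε * |x|)) := le_min (by positivity) (by positivity)
    rw [Real.norm_eq_abs, _root_.abs_of_nonneg (by positivity), div_eq_mul_inv]
    exact mul_le_mul_of_nonneg_right (min_le_left _ _) (by positivity)
  · refine Filter.Eventually.of_forall fun x => ?_
    have hcont : ContinuousAt (fun ε : ℝ => min (2 * M) (L * (ε * |x|)) / (1 + x ^ 2)) 0 := by
      have hc : Continuous fun ε : ℝ => min (2 * M) (L * (ε * |x|)) / (1 + x ^ 2) := by
        have h0 : Continuous fun ε : ℝ => L * (ε * |x|) :=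
          continuous_const.mul (continuous_id.mul continuous_const)
        exact (continuous_const.min h0).div_const _
      exact hc.continuousAt
    have hval : min (2 * M) (L * ((0:ℝ) * |x|)) / (1 + x ^ 2) = 0 := by
      simp [min_eq_right (by positivity : (0:ℝ) ≤ 2 * M)]
    have := hcont.tendsto.mono_left (nhdsWithin_le_nhds (s := Set.Ioi (0:ℝ)))
    rwa [hval] at this

lemma aux_cauchy_cont (b : ℝ → ℝ) (hbint : Integrable b) (hbcont : Continuous b)
    {ε : ℝ} (hε : 0 < ε) :
    Continuous fun t : ℝ => cauchyTransform b ((t : ℂ) + ε * I) := by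
  simp only [cauchyTransform]
  refine continuous_of_dominated (bound := fun k => |b k| * ε⁻¹) ?_ ?_
    (hbint.abs.mul_const ε⁻¹) ?_
  · intro t
    refine Continuous.aestronglyMeasurable ?_
    exact (Complex.continuous_ofReal.comp hbcont).div (by continuity)
      (fun k => aux_denom_ne_zero hε t k)
  · intro t
    exact Filter.Eventually.of_forall fun k => aux_norm_le hε b t k
  · refine Filter.Eventually.of_forall fun k => ?_
    refine continuous_const.div (by continuity) ?_
    intro t
    exact aux_denom_ne_zero hε t k

end Aux

/-- Let `A` be a bounded self-adjoint operator, `b : ℝ → ℝ` nonnegative,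
`C¹`, with `b` and `b'` bounded and integrable, and `β(λ) = ∫ b(k)/(k−λ) dk`. Then
`β(A+iε) − β_*(A−iε) = f_ε(A)` with `f_ε(t) = β(t+iε) − conj(β(t+iε))` converges
strongly, as `ε ↓ 0`, to `g(A)` where `g(t) = 2πi·b(t)`. -/
theorem cauchyTransform_jump_strong_convergence
    {H : Type*} [NormedAddCommGroup H] [InnerProductSpace ℂ H] [CompleteSpace H]
    (A : H →L[ℂ] H) (hA : IsSelfAdjoint A)
    (b : ℝ → ℝ) (hb0 : ∀ t : ℝ, 0 ≤ b t) (hbC1 : ContDiff ℝ 1 b)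
    (hbbdd : ∃ C : ℝ, ∀ t : ℝ, |b t| ≤ C) (hbint : Integrable b)
    (hb'bdd : ∃ C : ℝ, ∀ t : ℝ, |deriv b t| ≤ C) (hb'int : Integrable (deriv b)) :
    ∀ u : H,
      Tendsto
        (fun ε : ℝ =>
          ‖cfc (fun z : ℂ =>
              cauchyTransform b ((z.re : ℂ) + ε * I) -
                conj (cauchyTransform b ((z.re : ℂ) + ε * I))) A u -
            cfc (fun z : ℂ => (2 * (Real.pi : ℂ) * I) * ((b z.re : ℝ) : ℂ)) A u‖)
        (𝓝[>] 0) (𝓝 0) := by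
  intro u
  have hSN : IsStarNormal A := hA.isStarNormal
  obtain ⟨M, hM⟩ := hbbdd
  obtain ⟨L, hLb⟩ := hb'bdd
  have hM0 : 0 ≤ M := le_trans (abs_nonneg _) (hM 0)
  have hL0 : 0 ≤ L := le_trans (abs_nonneg _) (hLb 0)
  have hbcont : Continuous b := hbC1.continuous
  have hdiff : Differentiable ℝ b := hbC1.differentiable one_ne_zero
  have hlipW : LipschitzWith L.toNNReal b := by
    refine lipschitzWith_of_nnnorm_deriv_le hdiff fun x => ?_
    rw [← NNReal.coe_le_coe, coe_nnnorm, Real.coe_toNNReal _ hL0, Real.norm_eq_abs]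
    exact hLb x
  have hlip : ∀ x y : ℝ, |b x - b y| ≤ L * |x - y| := by
    intro x y
    have := hlipW.dist_le_mul x y
    rw [Real.dist_eq, Real.dist_eq, Real.coe_toNNReal _ hL0] at this
    exact this
  set φ : ℝ → ℝ := fun ε => ∫ x : ℝ, min (2 * M) (L * (ε * |x|)) / (1 + x ^ 2) with hφ
  have hbound : ∀ ε ∈ Set.Ioi (0:ℝ),
      ‖cfc (fun z : ℂ =>
          cauchyTransform b ((z.re : ℂ) + ε * I) -
            conj (cauchyTransform b ((z.re : ℂ) + ε * I))) A u -
        cfc (fun z : ℂ => (2 * (Real.pi : ℂ) * I) * ((b z.re : ℝ) : ℂ)) A u‖ ≤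
        2 * φ ε * ‖u‖ := by
    intro ε hε
    have hεpos : (0:ℝ) < ε := hε
    set f : ℂ → ℂ := fun z =>
      cauchyTransform b ((z.re : ℂ) + ε * I) -
        conj (cauchyTransform b ((z.re : ℂ) + ε * I)) with hf
    set g : ℂ → ℂ := fun z => (2 * (Real.pi : ℂ) * I) * ((b z.re : ℝ) : ℂ) with hg
    have hβc : Continuous fun t : ℝ => cauchyTransform b ((t : ℂ) + ε * I) :=
      aux_cauchy_cont b hbint hbcont hεpos
    have hfc : Continuous f := by
      refine Continuous.sub (hβc.comp Complex.continuous_re) ?_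
      exact Complex.continuous_conj.comp (hβc.comp Complex.continuous_re)
    have hgc : Continuous g := by
      refine continuous_const.mul ?_
      exact Complex.continuous_ofReal.comp (hbcont.comp Complex.continuous_re)
    have h2 : ∀ z : ℂ, ‖f z - g z‖ ≤ 2 * φ ε := by
      intro z
      set t := z.re with ht
      have key := aux_key b M L hM hlip hbint hbcont hεpos t
      have heq : f z - g z =
          ((2 * ((cauchyTransform b ((t : ℂ) + ε * I)).im - Real.pi * b t) : ℝ) : ℂ) * I := by
        simp only [hf, hg]
        rw [Complex.sub_conj]
        push_cast
        ring
      rw [heq]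
      rw [norm_mul, Complex.norm_I, mul_one, Complex.norm_real, Real.norm_eq_abs, abs_mul]
      rw [show |(2:ℝ)| = 2 by norm_num]
      exact mul_le_mul_of_nonneg_left key (by norm_num)
    have hφ0 : 0 ≤ φ ε := aux_phi_nonneg M L hM0 hL0 hεpos
    have h1 : cfc f A u - cfc g A u = cfc (fun z => f z - g z) A u := by
      rw [cfc_sub f g A hfc.continuousOn hgc.continuousOn, ContinuousLinearMap.sub_apply]
    calc ‖cfc f A u - cfc g A u‖ = ‖cfc (fun z => f z - g z) A u‖ := by rw [h1]
      _ ≤ ‖cfc (fun z => f z - g z) A‖ * ‖u‖ := ContinuousLinearMap.le_opNorm _ u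
      _ ≤ 2 * φ ε * ‖u‖ := by
          refine mul_le_mul_of_nonneg_right ?_ (norm_nonneg u)
          exact norm_cfc_le (by positivity) (fun x _ => h2 x)
  have hφt : Filter.Tendsto φ (𝓝[>] (0:ℝ)) (𝓝 0) := aux_phi_tendsto M L hM0 hL0
  have hlim : Filter.Tendsto (fun ε : ℝ => 2 * φ ε * ‖u‖) (𝓝[>] (0:ℝ)) (𝓝 0) := by
    have := (hφt.const_mul 2).mul_const ‖u‖
    simpa using this
  refine squeeze_zero' ?_ ?_ hlim
  · exact Filter.Eventually.of_forall fun ε => norm_nonneg _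
  · filter_upwards [self_mem_nhdsWithin] with ε hε
    exact hbound ε hε
end
end
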